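/- arXiv:1006.1225 — 3 statements merged into one kernel-verified Lean document; each statement's English description precedes it below -/
import Mathlib

section
/- Let a : [0,∞) → ℝ be continuous with compact support and let λ > 0 be such that λ + 4π r² a(r) > 0 for all r ≥ 0. If u ∈ C²([0,∞)) is a bounded solution of (r² u')' = (λ + 4π r² a(r)) u on [0,∞), then u = 0. -/
open Real

lemma reg1 (u : ℝ → ℝ) (hu : ContDiffOn ℝ 2 u (Set.Ici 0)) :
    DifferentiableOn ℝ u (Set.Ioi (0:ℝ)) ∧ DifferentiableOn ℝ (deriv u) (Set.Ioi (0:ℝ)) := by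
  have h2 : ContDiffOn ℝ 2 u (Set.Ioi (0:ℝ)) := hu.mono Set.Ioi_subset_Ici_self
  constructor
  · exact h2.differentiableOn (by norm_num)
  · have := h2.deriv_of_isOpen isOpen_Ioi (m := 1) (by norm_num)
    exact this.differentiableOn (by norm_num)


lemma regW (u : ℝ → ℝ) (hu : ContDiffOn ℝ 2 u (Set.Ici 0)) :
    ContinuousOn (fun r => u r * (r ^ 2 * deriv u r)) (Set.Ici (0:ℝ)) := by
  have hf0 : ContinuousOn (derivWithin u (Set.Ici 0)) (Set.Ici (0:ℝ)) :=
    hu.continuousOn_derivWithin (uniqueDiffOn_Ici 0) (by norm_num)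
  have hc : ContinuousOn (fun r => u r * (r ^ 2 * derivWithin u (Set.Ici 0) r)) (Set.Ici (0:ℝ)) :=
    hu.continuousOn.mul ((continuousOn_pow 2).mul hf0)
  apply hc.congr
  intro r hr
  rcases eq_or_lt_of_le (Set.mem_Ici.mp hr) with h | h
  · simp [← h]
  · simp only []
    rw [derivWithin_of_mem_nhds (Ici_mem_nhds h)]

lemma key (c : ℝ → ℝ) (m : ℝ) (hm : 0 < m) (hc : ∀ r, 0 ≤ r → m ≤ c r)
    (u : ℝ → ℝ) (hu : ContDiffOn ℝ 2 u (Set.Ici 0))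
    (M : ℝ) (hbdd : ∀ r, 0 ≤ r → |u r| ≤ M)
    (hode : ∀ r, 0 ≤ r → deriv (fun s => s ^ 2 * deriv u s) r = c r * u r)
    (r1 : ℝ) (hr1 : 0 < r1) (hu1 : 0 < u r1)
    (hW : ∀ r, r1 ≤ r → 0 < u r * (r ^ 2 * deriv u r)) : False := by
  obtain ⟨hdu, hddu⟩ := reg1 u hu
  set v : ℝ → ℝ := fun s => s ^ 2 * deriv u s with hv
  have hdv : DifferentiableOn ℝ v (Set.Ioi (0:ℝ)) :=
    (differentiable_pow 2).differentiableOn.mul hddu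
  have hIci : Set.Ici r1 ⊆ Set.Ioi (0:ℝ) := fun x hx => lt_of_lt_of_le hr1 hx
  have hIoi : Set.Ioi r1 ⊆ Set.Ioi (0:ℝ) := fun x hx => lt_trans hr1 hx
  -- u is positive on [r1, ∞)
  have hupos : ∀ r, r1 ≤ r → 0 < u r := by
    intro r hr
    by_contra h
    push_neg at h
    have hne : u r ≠ 0 := by
      intro h0
      have := hW r hr
      rw [h0] at this; simp at this
    have hlt : u r < 0 := lt_of_le_of_ne h hne
    have hcont : ContinuousOn u (Set.Icc r1 r) :=
      (hdu.continuousOn).mono (fun x hx => hIci (Set.mem_Ici.mpr hx.1))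
    have h0mem : (0:ℝ) ∈ Set.Icc (u r) (u r1) := ⟨le_of_lt hlt, le_of_lt hu1⟩
    have hr1r : r1 ≤ r := hr
    obtain ⟨x, hx, hux⟩ := intermediate_value_Icc' hr1r hcont h0mem
    have := hW x hx.1
    rw [hux] at this; simp at this
  -- v positive on [r1, ∞)
  have hvpos : ∀ r, r1 ≤ r → 0 < v r := by
    intro r hr
    have h1 := hW r hr
    have h2 := hupos r hr
    show 0 < r ^ 2 * deriv u r
    nlinarith [h1, h2]
  -- deriv u positive on [r1, ∞)
  have hdupos : ∀ r, r1 ≤ r → 0 < deriv u r := by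
    intro r hr
    have h1 : 0 < r ^ 2 * deriv u r := hvpos r hr
    have hrpos : 0 < r := lt_of_lt_of_le hr1 hr
    nlinarith [sq_nonneg r, mul_pos hrpos hrpos]
  -- u monotone on [r1, ∞)
  have humono : MonotoneOn u (Set.Ici r1) := by
    apply monotoneOn_of_deriv_nonneg (convex_Ici r1)
    · exact hdu.continuousOn.mono hIci
    · rw [interior_Ici]; exact hdu.mono hIoi
    · rw [interior_Ici]; intro x hx; exact le_of_lt (hdupos x (le_of_lt hx))
  -- v(r) ≥ m * u r1 * (r - r1) for r ≥ r1
  set K : ℝ := m * u r1 with hK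
  have hKpos : 0 < K := mul_pos hm hu1
  have hdvval : ∀ r, r1 ≤ r → deriv v r = c r * u r := by
    intro r hr; exact hode r (le_of_lt (lt_of_lt_of_le hr1 hr))
  have hvlow : ∀ r, r1 ≤ r → K * (r - r1) ≤ v r := by
    intro r hr
    set h : ℝ → ℝ := fun s => v s - K * (s - r1) with hh
    have hdh : DifferentiableOn ℝ h (Set.Ioi r1) :=
      (hdv.mono hIoi).sub ((differentiable_id.sub_const r1).const_mul K).differentiableOn
    have hmonoh : MonotoneOn h (Set.Ici r1) := by
      apply monotoneOn_of_deriv_nonneg (convex_Ici r1)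
      · exact ((hdv.continuousOn.mono hIci).sub (Continuous.continuousOn (by continuity)))
      · rw [interior_Ici]; exact hdh
      · rw [interior_Ici]
        intro x hx
        have hx1 : r1 ≤ x := le_of_lt hx
        have hdx : DifferentiableAt ℝ v x :=
          hdv.differentiableAt (Ioi_mem_nhds (lt_of_lt_of_le hr1 hx1))
        have : deriv h x = deriv v x - K := by
          rw [hh]
          rw [deriv_fun_sub hdx (by fun_prop)]
          simp [deriv_const_mul, mul_comm]
        rw [this, hdvval x hx1]
        have hcx := hc x (le_of_lt (lt_of_lt_of_le hr1 hx1))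
        have hux := hupos x hx1
        have humx : u r1 ≤ u x := humono Set.self_mem_Ici hx1 hx1
        nlinarith
    have := hmonoh Set.self_mem_Ici hr hr
    have hh1 : h r1 = v r1 := by simp [hh]
    have hvr1 := hvpos r1 (le_refl r1)
    simp only [hh] at this hh1
    nlinarith [this, hvr1]
  -- logarithmic lower bound leads to unboundedness
  set K2 : ℝ := K / 2 with hK2
  have hK2pos : 0 < K2 := by positivity
  set g : ℝ → ℝ := fun s => u s - K2 * Real.log s with hg
  have hI2 : Set.Ici (2*r1) ⊆ Set.Ioi (0:ℝ) := fun x hx => by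
    have h2x : 2*r1 ≤ x := hx; simp only [Set.mem_Ioi]; linarith
  have hI2' : Set.Ioi (2*r1) ⊆ Set.Ioi (0:ℝ) := fun x hx => by
    have h2x : 2*r1 < x := hx; simp only [Set.mem_Ioi]; linarith
  have hIne : Set.Ici (2*r1) ⊆ ({0}ᶜ : Set ℝ) := fun x hx => by
    have h2x : 2*r1 ≤ x := hx
    simp only [Set.mem_compl_iff, Set.mem_singleton_iff]
    intro h0; rw [h0] at h2x; linarith
  have hgmono : MonotoneOn g (Set.Ici (2*r1)) := by
    apply monotoneOn_of_deriv_nonneg (convex_Ici _)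
    · exact (hdu.continuousOn.mono hI2).sub
        ((Real.continuousOn_log.mono hIne).const_smul K2)
    · rw [interior_Ici]
      exact (hdu.mono hI2').sub
        ((Real.differentiableOn_log.mono (fun x (hx : x ∈ Set.Ioi (2*r1)) => hIne (Set.mem_Ici.mpr (le_of_lt hx)))).const_mul K2)
    · rw [interior_Ici]
      intro x hx
      have h2x : 2*r1 < x := hx
      have hx0 : 0 < x := by linarith
      have hdx : deriv g x = deriv u x - K2 * (1/x) := by
        rw [hg]
        rw [deriv_fun_sub (hdu.differentiableAt (Ioi_mem_nhds hx0))
          ((Real.differentiableAt_log hx0.ne').const_mul K2)]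
        rw [deriv_const_mul _ (Real.differentiableAt_log hx0.ne'), Real.deriv_log, one_div]
      have hvx' : K * (x - r1) ≤ x ^ 2 * deriv u x := hvlow x (by linarith)
      have key2 : K2 * (1/x) ≤ deriv u x := by
        rw [mul_one_div, div_le_iff₀ hx0, hK2]
        nlinarith [hvx', hx0, mul_pos hx0 hx0]
      rw [hdx]; linarith
  -- pick a large point where u exceeds its bound
  have hM1 : u (2*r1) ≤ M := (abs_le.mp (hbdd (2*r1) (by linarith))).2
  set E : ℝ := (M - u (2*r1))/K2 + 1 with hE
  have hE1 : 1 ≤ E := by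
    rw [hE]
    have : 0 ≤ (M - u (2*r1))/K2 := div_nonneg (by linarith) (le_of_lt hK2pos)
    linarith
  set r2 : ℝ := 2*r1*Real.exp E with hr2def
  have hexp1 : 1 ≤ Real.exp E := by
    rw [← Real.exp_zero]; exact Real.exp_le_exp.mpr (by linarith)
  have hr2 : 2*r1 ≤ r2 := by
    rw [hr2def]; nlinarith
  have hlog : Real.log r2 = Real.log (2*r1) + E := by
    rw [hr2def, Real.log_mul (by positivity) (Real.exp_pos E).ne', Real.log_exp]
  have hgm := hgmono Set.self_mem_Ici (Set.mem_Ici.mpr hr2) hr2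
  simp only [hg] at hgm
  rw [hlog] at hgm
  have hEeq : K2 * E = (M - u (2*r1)) + K2 := by
    rw [hE]; field_simp
  have hur2 : u r2 ≤ M := (abs_le.mp (hbdd r2 (by linarith))).2
  nlinarith [hgm, hEeq, hur2, hK2pos]

/-- If `a` is continuous with compact support, `l > 0`, and
`l + 4π r² a(r) > 0` for all `r ≥ 0`, then any bounded `C²` solution on `[0,∞)` of
`(r² u')' = (l + 4π r² a(r)) u` vanishes identically on `[0,∞)`. -/
theorem stmt0
    (a : ℝ → ℝ) (ha : Continuous a) (hsupp : HasCompactSupport a)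
    (l : ℝ) (hl : 0 < l)
    (hpos : ∀ r : ℝ, 0 ≤ r → 0 < l + 4 * Real.pi * r ^ 2 * a r)
    (u : ℝ → ℝ) (hu : ContDiffOn ℝ 2 u (Set.Ici 0))
    (hbdd : ∃ M : ℝ, ∀ r : ℝ, 0 ≤ r → |u r| ≤ M)
    (hode : ∀ r : ℝ, 0 ≤ r →
      deriv (fun s => s ^ 2 * deriv u s) r = (l + 4 * Real.pi * r ^ 2 * a r) * u r) :
    ∀ r : ℝ, 0 ≤ r → u r = 0 := by
  obtain ⟨M, hM⟩ := hbdd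
  set c : ℝ → ℝ := fun r => l + 4 * Real.pi * r ^ 2 * a r with hcdef
  have hccont : Continuous c := by fun_prop
  -- uniform lower bound on c
  obtain ⟨m, hm, hc⟩ : ∃ m, 0 < m ∧ ∀ r, 0 ≤ r → m ≤ c r := by
    obtain ⟨R, hR⟩ := (Metric.isBounded_iff_subset_closedBall 0).mp hsupp.isCompact.isBounded
    set R' : ℝ := max R 1 with hR'
    have hR'1 : (1:ℝ) ≤ R' := le_max_right _ _
    obtain ⟨x0, hx0, hmin⟩ := isCompact_Icc.exists_isMinOn
      (Set.nonempty_Icc.mpr (by linarith : (0:ℝ) ≤ R')) (hccont.continuousOn (s := Set.Icc 0 R'))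
    refine ⟨min (c x0) l, lt_min (hpos x0 hx0.1) hl, fun r hr => ?_⟩
    rcases le_or_gt r R' with h | h
    · exact le_trans (min_le_left _ _) (hmin ⟨hr, h⟩)
    · have hnot : r ∉ tsupport a := by
        intro hmem
        have := hR hmem
        rw [Metric.mem_closedBall, Real.dist_eq, sub_zero, abs_of_nonneg hr] at this
        have : r ≤ R' := le_trans this (le_max_left _ _)
        linarith
      have ha0 : a r = 0 := image_eq_zero_of_notMem_tsupport hnot
      have : c r = l := by rw [hcdef]; simp [ha0]
      rw [this]; exact min_le_right _ _
  have hode' : ∀ r, 0 ≤ r → deriv (fun s => s ^ 2 * deriv u s) r = c r * u r := hode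
  obtain ⟨hdu, hddu⟩ := reg1 u hu
  set W : ℝ → ℝ := fun r => u r * (r ^ 2 * deriv u r) with hWdef
  have hdv : DifferentiableOn ℝ (fun s => s ^ 2 * deriv u s) (Set.Ioi (0:ℝ)) :=
    (differentiable_pow 2).differentiableOn.mul hddu
  have hWd : DifferentiableOn ℝ W (Set.Ioi (0:ℝ)) := hdu.mul hdv
  have hWderiv : ∀ r : ℝ, 0 < r →
      deriv W r = r ^ 2 * (deriv u r) ^ 2 + c r * (u r) ^ 2 := by
    intro r hr
    have h1 : DifferentiableAt ℝ u r := hdu.differentiableAt (Ioi_mem_nhds hr)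
    have h2 : DifferentiableAt ℝ (fun s => s ^ 2 * deriv u s) r :=
      hdv.differentiableAt (Ioi_mem_nhds hr)
    rw [hWdef]
    rw [deriv_fun_mul h1 h2, hode' r (le_of_lt hr)]
    ring
  have hWmono : MonotoneOn W (Set.Ici (0:ℝ)) := by
    apply monotoneOn_of_deriv_nonneg (convex_Ici 0)
    · exact regW u hu
    · rw [interior_Ici]; exact hWd
    · rw [interior_Ici]
      intro x hx
      rw [hWderiv x hx]
      nlinarith [sq_nonneg (x * deriv u x), sq_nonneg (u x), hc x (le_of_lt hx), hm]
  have hW0 : W 0 = 0 := by rw [hWdef]; norm_num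
  -- main argument
  intro r0 hr0
  by_contra hne
  -- find a positive point where u ≠ 0
  obtain ⟨r0', hr0', hune⟩ : ∃ r : ℝ, 0 < r ∧ u r ≠ 0 := by
    rcases eq_or_lt_of_le hr0 with h | h
    · have hcw : ContinuousWithinAt u (Set.Ioi 0) 0 :=
        ((hu.continuousOn).continuousWithinAt (Set.self_mem_Ici)).mono Set.Ioi_subset_Ici_self
      have hne0 : u 0 ≠ 0 := by rw [← h] at hne; exact hne
      have hev : ∀ᶠ x in nhdsWithin (0:ℝ) (Set.Ioi 0), u x ≠ 0 :=
        hcw (isOpen_ne.mem_nhds hne0)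
      have hmem : ∀ᶠ x in nhdsWithin (0:ℝ) (Set.Ioi 0), x ∈ Set.Ioi (0:ℝ) :=
        self_mem_nhdsWithin
      obtain ⟨x, hx1, hx2⟩ := (hev.and hmem).exists
      exact ⟨x, hx2, hx1⟩
    · exact ⟨r0, h, hne⟩
  have hWr0 : 0 ≤ W r0' := by
    have := hWmono Set.self_mem_Ici (Set.mem_Ici.mpr (le_of_lt hr0')) (le_of_lt hr0')
    rw [hW0] at this; exact this
  by_cases hcase : ∃ r1, r0' ≤ r1 ∧ 0 < W r1
  · obtain ⟨r1, hr1ge, hWr1⟩ := hcase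
    have hr1pos : 0 < r1 := lt_of_lt_of_le hr0' hr1ge
    have hWall : ∀ r, r1 ≤ r → 0 < W r := fun r hr =>
      lt_of_lt_of_le hWr1 (hWmono (Set.mem_Ici.mpr (by linarith)) (Set.mem_Ici.mpr (by linarith)) hr)
    have hur1 : u r1 ≠ 0 := by
      intro h0
      have h1 := hWr1
      simp only [hWdef, h0, zero_mul] at h1
      exact lt_irrefl 0 h1
    rcases lt_or_gt_of_ne hur1 with hneg | hposu
    · -- u r1 < 0 : apply key to -u
      refine key c m hm hc (fun x => -u x) hu.neg M (fun r hr => by simpa using hM r hr)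
        (fun r hr => ?_) r1 hr1pos (by simpa using hneg) (fun r hr => ?_)
      · have hfun : (fun s => s ^ 2 * deriv (fun x => -u x) s) = fun s => -(s ^ 2 * deriv u s) := by
          funext s; rw [deriv.fun_neg]; ring
        rw [hfun, deriv.fun_neg, hode' r hr]; ring
      · have hd : deriv (fun x => -u x) r = -deriv u r := deriv.neg
        simp only [hd]
        have h1 : 0 < u r * (r ^ 2 * deriv u r) := hWall r hr
        nlinarith [h1]
    · exact key c m hm hc u hu M hM hode' r1 hr1pos hposu (fun r hr => hWall r hr)
  · -- W vanishes identically beyond r0', forcing u ≡ 0 there, contradiction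
    push_neg at hcase
    have hWzero : ∀ r, r0' ≤ r → W r = 0 := by
      intro r hr
      refine le_antisymm (hcase r hr) ?_
      have := hWmono Set.self_mem_Ici (Set.mem_Ici.mpr (by linarith : (0:ℝ) ≤ r)) (by linarith)
      rw [hW0] at this; exact this
    have huz : ∀ r, r0' < r → u r = 0 := by
      intro r hr
      have hrpos : 0 < r := lt_trans hr0' hr
      have hev : W =ᶠ[nhds r] (fun _ => (0:ℝ)) := by
        filter_upwards [Ioi_mem_nhds hr] with x hx
        exact hWzero x (le_of_lt hx)
      have hd0 : deriv W r = 0 := by rw [hev.deriv_eq]; simp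
      rw [hWderiv r hrpos] at hd0
      have hcr := hc r (le_of_lt hrpos)
      have h2 : u r ^ 2 ≤ 0 := by
        nlinarith [sq_nonneg (r * deriv u r), sq_nonneg (u r), hcr, hm, hd0]
      have h3 : u r ^ 2 = 0 := le_antisymm h2 (sq_nonneg _)
      exact pow_eq_zero_iff two_ne_zero |>.mp h3
    have h1 : Filter.Tendsto u (nhdsWithin r0' (Set.Ioi r0')) (nhds (u r0')) :=
      ((hdu.differentiableAt (Ioi_mem_nhds hr0')).continuousAt.continuousWithinAt)
    have h2 : Filter.Tendsto u (nhdsWithin r0' (Set.Ioi r0')) (nhds 0) := by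
      apply Filter.Tendsto.congr' _ tendsto_const_nhds
      filter_upwards [self_mem_nhdsWithin] with x hx
      exact (huz x hx).symm
    exact hune (tendsto_nhds_unique h1 h2)
end

section
/- Let a : [0,∞) → ℝ be continuous and let g ∈ C²([0,∞)) satisfy (r² g')' = 4π r² a(r) g for r ≥ 0 with g(0) = 0 and g' bounded near 0. Then g = 0 on [0,∞). -/
open Set MeasureTheory Filter

/-- If `a` is continuous and `g ∈ C²([0,∞))` satisfies `(r² g')' = 4π r² a(r) g` on `[0,∞)`
with `g(0) = 0` and `g'` bounded near `0`, then `g = 0` on `[0,∞)`. -/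
theorem stmt1
    (a : ℝ → ℝ) (ha : Continuous a)
    (g : ℝ → ℝ) (hg : ContDiffOn ℝ 2 g (Set.Ici 0))
    (hode : ∀ r : ℝ, 0 ≤ r →
      deriv (fun s => s ^ 2 * deriv g s) r = 4 * Real.pi * r ^ 2 * a r * g r)
    (h0 : g 0 = 0)
    (hbdd : ∃ M ε : ℝ, 0 < ε ∧ ∀ r : ℝ, 0 ≤ r → r ≤ ε → |deriv g r| ≤ M) :
    ∀ r : ℝ, 0 ≤ r → g r = 0 := by
  obtain ⟨M, ε, hε, hM⟩ := hbdd
  have hgc : ContinuousOn g (Set.Ici 0) := hg.continuousOn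
  have habs : ContinuousOn (fun s => |g s|) (Set.Ici 0) := hgc.abs
  have hg1 : ContDiffOn ℝ 1 (deriv g) (Set.Ioi 0) :=
    (hg.mono Set.Ioi_subset_Ici_self).deriv_of_isOpen isOpen_Ioi (by norm_num)
  have hdc : ContinuousOn (deriv g) (Set.Ioi 0) := hg1.continuousOn
  have hgd : ∀ s : ℝ, 0 < s → HasDerivAt g (deriv g s) s := by
    intro s hs
    exact ((hg.differentiableOn (by norm_num) s hs.le).differentiableAt
      (Ici_mem_nhds hs)).hasDerivAt
  have hdd : ∀ s : ℝ, 0 < s → DifferentiableAt ℝ (deriv g) s := by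
    intro s hs
    exact (hg1.differentiableOn one_ne_zero s hs).differentiableAt (isOpen_Ioi.mem_nhds hs)
  have hφd : ∀ s : ℝ, 0 < s →
      HasDerivAt (fun t => t ^ 2 * deriv g t) (4 * Real.pi * s ^ 2 * a s * g s) s := by
    intro s hs
    have hd : DifferentiableAt ℝ (fun t => t ^ 2 * deriv g t) s :=
      (differentiableAt_pow 2).mul (hdd s hs)
    have h2 := hd.hasDerivAt
    rwa [hode s hs.le] at h2
  have hfc : ContinuousOn (fun s : ℝ => 4 * Real.pi * s ^ 2 * a s * g s) (Set.Ici 0) :=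
    (((continuous_const.mul (continuous_pow 2)).mul ha).continuousOn).mul hgc
  have key1 : ∀ r : ℝ, 0 < r →
      r ^ 2 * deriv g r = ∫ s in (0:ℝ)..r, 4 * Real.pi * s ^ 2 * a s * g s := by
    intro r hr
    have hint : IntervalIntegrable (fun s => 4 * Real.pi * s ^ 2 * a s * g s) volume 0 r :=
      (hfc.mono (by rw [Set.uIcc_of_le hr.le]; exact Set.Icc_subset_Ici_self)).intervalIntegrable
    have ht0 : Tendsto (fun s : ℝ => s ^ 2 * deriv g s) (nhdsWithin 0 (Set.Ioi 0)) (nhds 0) := by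
      have hb : Tendsto (fun s : ℝ => s ^ 2 * M) (nhdsWithin 0 (Set.Ioi 0)) (nhds 0) := by
        have h1 : Tendsto (fun s : ℝ => s ^ 2 * M) (nhds 0) (nhds 0) := by
          have h2 : Continuous (fun s : ℝ => s ^ 2 * M) := by continuity
          simpa using h2.tendsto 0
        exact h1.mono_left nhdsWithin_le_nhds
      apply squeeze_zero_norm' _ hb
      filter_upwards [Ioc_mem_nhdsGT_of_mem (Set.left_mem_Ico.mpr hε)] with s hs
      have h1 : |deriv g s| ≤ M := hM s hs.1.le hs.2
      calc ‖s ^ 2 * deriv g s‖ = s ^ 2 * |deriv g s| := by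
            rw [Real.norm_eq_abs, abs_mul, abs_of_nonneg (by positivity : (0:ℝ) ≤ s ^ 2)]
        _ ≤ s ^ 2 * M := mul_le_mul_of_nonneg_left h1 (by positivity)
    have htr : Tendsto (fun s : ℝ => s ^ 2 * deriv g s) (nhdsWithin r (Set.Iio r))
        (nhds (r ^ 2 * deriv g r)) :=
      ((differentiableAt_pow 2).mul (hdd r hr)).continuousAt.continuousWithinAt
    have heq := intervalIntegral.integral_eq_sub_of_hasDerivAt_of_tendsto hr
      (fun x hx => hφd x hx.1) hint ht0 htr
    rw [heq, sub_zero]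
  intro r hr
  rcases eq_or_lt_of_le hr with h | hr0
  · rw [← h]; exact h0
  obtain ⟨xa, -, hxa⟩ := isCompact_Icc.exists_isMaxOn (Set.nonempty_Icc.mpr hr)
      (ha.abs.continuousOn : ContinuousOn (fun s => |a s|) (Set.Icc 0 r))
  set C := |a xa| with hC
  have hC0 : 0 ≤ C := abs_nonneg _
  set K := 4 * Real.pi * C with hK
  have hK0 : 0 ≤ K := by
    have := Real.pi_pos
    positivity
  set G : ℝ → ℝ := fun t => ∫ s in (0:ℝ)..t, |g s| with hG
  have hgabs_int : ∀ t : ℝ, 0 ≤ t → IntervalIntegrable (fun s => |g s|) volume 0 t := by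
    intro t ht
    exact (habs.mono (by rw [Set.uIcc_of_le ht]; exact Set.Icc_subset_Ici_self)).intervalIntegrable
  have hGc : ContinuousOn G (Set.Icc 0 r) := by
    have h1 : IntegrableOn (fun s : ℝ => |g s|) (Set.uIcc 0 r) volume := by
      rw [Set.uIcc_of_le hr]
      exact (habs.mono Set.Icc_subset_Ici_self).integrableOn_Icc
    have := intervalIntegral.continuousOn_primitive_interval h1
    rwa [Set.uIcc_of_le hr] at this
  have hGmono : ∀ s t : ℝ, 0 ≤ s → s ≤ t → G s ≤ G t := by
    intro s t hs hst
    have h1 : IntervalIntegrable (fun u => |g u|) volume 0 s := hgabs_int s hs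
    have h2 : IntervalIntegrable (fun u => |g u|) volume s t :=
      (habs.mono (by rw [Set.uIcc_of_le hst]; exact fun x hx => hs.trans hx.1)).intervalIntegrable
    have hadd := intervalIntegral.integral_add_adjacent_intervals h1 h2
    have hpos : 0 ≤ ∫ u in s..t, |g u| :=
      intervalIntegral.integral_nonneg hst (fun u _ => abs_nonneg _)
    calc G s ≤ G s + ∫ u in s..t, |g u| := le_add_of_nonneg_right hpos
      _ = G t := hadd
  have hGnn : ∀ t : ℝ, 0 ≤ t → 0 ≤ G t := by
    intro t ht
    have := hGmono 0 t le_rfl ht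
    simpa [hG, intervalIntegral.integral_same] using this
  -- integrability of deriv g on [0, r]
  have hδ : 0 < min ε r := lt_min hε hr0
  have hsubB : Set.Icc (min ε r) r ⊆ Set.Ioi 0 := fun x hx => lt_of_lt_of_le hδ hx.1
  obtain ⟨xb, -, hxb⟩ := isCompact_Icc.exists_isMaxOn
      (Set.nonempty_Icc.mpr (min_le_right ε r)) ((hdc.mono hsubB).abs)
  set B := |deriv g xb| with hB
  have hgint : IntervalIntegrable (deriv g) volume 0 r := by
    rw [intervalIntegrable_iff_integrableOn_Ioc_of_le hr]
    apply MeasureTheory.Integrable.mono' (integrable_const (max M B))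
    · exact (measurable_deriv g).aestronglyMeasurable.restrict
    · refine (MeasureTheory.ae_restrict_iff' measurableSet_Ioc).mpr (MeasureTheory.ae_of_all _ ?_)
      intro x hx
      rw [Real.norm_eq_abs]
      rcases le_or_gt x ε with hxe | hxe
      · exact le_max_of_le_left (hM x hx.1.le hxe)
      · exact le_max_of_le_right (hxb ⟨(min_le_left ε r).trans hxe.le, hx.2⟩)
  -- step 2 : bound on deriv g
  have key2 : ∀ s : ℝ, 0 < s → s ≤ r → |deriv g s| ≤ K * G s := by
    intro s hs hsr
    have h1 := key1 s hs
    have hsub : Set.uIcc 0 s ⊆ Set.Ici 0 := by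
      rw [Set.uIcc_of_le hs.le]; exact Set.Icc_subset_Ici_self
    have hint1 : IntervalIntegrable (fun t : ℝ => |4 * Real.pi * t ^ 2 * a t * g t|)
        volume 0 s := ((hfc.mono hsub).abs).intervalIntegrable
    have hint2 : IntervalIntegrable (fun t : ℝ => 4 * Real.pi * s ^ 2 * C * |g t|)
        volume 0 s := (continuousOn_const.mul (habs.mono hsub)).intervalIntegrable
    have h2 : |∫ t in (0:ℝ)..s, 4 * Real.pi * t ^ 2 * a t * g t| ≤
        ∫ t in (0:ℝ)..s, |4 * Real.pi * t ^ 2 * a t * g t| := by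
      exact intervalIntegral.abs_integral_le_integral_abs
          (f := fun t : ℝ => 4 * Real.pi * t ^ 2 * a t * g t) (μ := volume) hs.le
    have h3 : (∫ t in (0:ℝ)..s, |4 * Real.pi * t ^ 2 * a t * g t|) ≤
        ∫ t in (0:ℝ)..s, 4 * Real.pi * s ^ 2 * C * |g t| := by
      apply intervalIntegral.integral_mono_on hs.le hint1 hint2
      intro t ht
      have habs_eq : |4 * Real.pi * t ^ 2 * a t * g t|
          = 4 * Real.pi * t ^ 2 * |a t| * |g t| := by
        rw [abs_mul, abs_mul, abs_mul,
          abs_of_nonneg (by positivity : (0:ℝ) ≤ 4 * Real.pi),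
          abs_of_nonneg (by positivity : (0:ℝ) ≤ t ^ 2)]
      rw [habs_eq]
      have h4 : t ^ 2 ≤ s ^ 2 := pow_le_pow_left₀ ht.1 ht.2 2
      have h5 : |a t| ≤ C := hxa ⟨ht.1, ht.2.trans hsr⟩
      have hπ : (0:ℝ) < Real.pi := Real.pi_pos
      gcongr
      all_goals first
        | positivity
        | exact ht.1
        | exact ht.2
        | exact h5
        | exact abs_nonneg _
    have h4 : (∫ t in (0:ℝ)..s, 4 * Real.pi * s ^ 2 * C * |g t|)
        = 4 * Real.pi * s ^ 2 * C * G s := intervalIntegral.integral_const_mul _ _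
    have h5 : s ^ 2 * |deriv g s| ≤ s ^ 2 * (K * G s) := by
      have h6 : |s ^ 2 * deriv g s| ≤ 4 * Real.pi * s ^ 2 * C * G s := by
        rw [h1]; exact h2.trans (h3.trans_eq h4)
      calc s ^ 2 * |deriv g s| = |s ^ 2 * deriv g s| := by
            rw [abs_mul, abs_of_nonneg (by positivity : (0:ℝ) ≤ s ^ 2)]
        _ ≤ 4 * Real.pi * s ^ 2 * C * G s := h6
        _ = s ^ 2 * (K * G s) := by rw [hK]; ring
    exact le_of_mul_le_mul_left h5 (by positivity)
  -- step 3 : FTC for g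
  have key3 : ∀ t : ℝ, 0 ≤ t → t ≤ r → g t = ∫ s in (0:ℝ)..t, deriv g s := by
    intro t ht htr
    have hsub : Set.uIcc 0 t ⊆ Set.uIcc 0 r := by
      rw [Set.uIcc_of_le ht, Set.uIcc_of_le hr]
      exact Set.Icc_subset_Icc le_rfl htr
    have heq := intervalIntegral.integral_eq_sub_of_hasDerivAt_of_le ht
      (hgc.mono Set.Icc_subset_Ici_self) (fun x hx => hgd x hx.1) (hgint.mono_set hsub)
    rw [heq, h0, sub_zero]
  -- step 4 : |g t| ≤ K * r * G t on [0, r]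
  have key4 : ∀ t : ℝ, 0 ≤ t → t ≤ r → |g t| ≤ K * r * G t := by
    intro t ht htr
    have hsub : Set.uIcc 0 t ⊆ Set.uIcc 0 r := by
      rw [Set.uIcc_of_le ht, Set.uIcc_of_le hr]
      exact Set.Icc_subset_Icc le_rfl htr
    have h1 : |g t| ≤ ∫ s in (0:ℝ)..t, |deriv g s| := by
      rw [key3 t ht htr]
      exact intervalIntegral.abs_integral_le_integral_abs (f := deriv g) (μ := volume) ht
    have habsint : IntervalIntegrable (fun s => |deriv g s|) volume 0 t :=
      (hgint.mono_set hsub).abs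
    have hKGint : IntervalIntegrable (fun s => K * G s) volume 0 t := by
      apply ContinuousOn.intervalIntegrable
      rw [Set.uIcc_of_le ht]
      exact continuousOn_const.mul (hGc.mono (Set.Icc_subset_Icc le_rfl htr))
    have h0ae : ∀ᵐ x : ℝ, x ≠ (0:ℝ) := by
      rw [MeasureTheory.ae_iff]
      simpa [not_not, Set.setOf_eq_eq_singleton] using measure_singleton (0:ℝ)
    have h2 : (∫ s in (0:ℝ)..t, |deriv g s|) ≤ ∫ s in (0:ℝ)..t, K * G s := by
      apply intervalIntegral.integral_mono_ae_restrict ht habsint hKGint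
      refine (MeasureTheory.ae_restrict_iff' measurableSet_Icc).mpr ?_
      filter_upwards [h0ae] with x hx hmem
      have hx0 : 0 < x := lt_of_le_of_ne hmem.1 (Ne.symm hx)
      exact key2 x hx0 (hmem.2.trans htr)
    have h3 : (∫ s in (0:ℝ)..t, K * G s) ≤ ∫ s in (0:ℝ)..t, K * G t := by
      apply intervalIntegral.integral_mono_on ht hKGint intervalIntegrable_const
      intro s hs
      exact mul_le_mul_of_nonneg_left (hGmono s t hs.1 hs.2) hK0
    have h4 : (∫ s in (0:ℝ)..t, K * G t) = K * G t * t := by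
      rw [intervalIntegral.integral_const, smul_eq_mul]
      ring
    have h5 : K * G t * t ≤ K * r * G t := by
      have h6 : 0 ≤ K * G t := mul_nonneg hK0 (hGnn t ht)
      calc K * G t * t ≤ K * G t * r := mul_le_mul_of_nonneg_left htr h6
        _ = K * r * G t := by ring
    calc |g t| ≤ ∫ s in (0:ℝ)..t, |deriv g s| := h1
      _ ≤ ∫ s in (0:ℝ)..t, K * G s := h2
      _ ≤ ∫ s in (0:ℝ)..t, K * G t := h3
      _ = K * G t * t := h4
      _ ≤ K * r * G t := h5
  -- Gronwall
  have hGd : ∀ x ∈ Set.Ico 0 r, HasDerivWithinAt G (|g x|) (Set.Ici x) x := by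
    intro x hx
    have hint : IntervalIntegrable (fun s => |g s|) volume 0 x := hgabs_int x hx.1
    have hsub : Set.Ioi x ⊆ Set.Ici 0 := fun y hy => (hx.1.trans_lt hy).le
    have hmeas : StronglyMeasurableAtFilter (fun s : ℝ => |g s|)
        (nhdsWithin x (Set.Ioi x)) volume :=
      ⟨Set.Ioi x, self_mem_nhdsWithin,
        (habs.mono hsub).aestronglyMeasurable measurableSet_Ioi⟩
    have hcw : ContinuousWithinAt (fun s : ℝ => |g s|) (Set.Ioi x) x :=
      (habs x hx.1).mono hsub
    exact intervalIntegral.integral_hasDerivWithinAt_right hint hmeas hcw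
  have hGron := norm_le_gronwallBound_of_norm_deriv_right_le
      (f := G) (f' := fun x => |g x|) (δ := 0) (K := K * r) (ε := 0) (a := 0) (b := r)
      hGc hGd (by simp [hG, intervalIntegral.integral_same]) ?_
  · have hGr : G r = 0 := by
      have h1 := hGron r (Set.right_mem_Icc.mpr hr)
      rw [gronwallBound_ε0_δ0] at h1
      exact norm_le_zero_iff.mp h1
    have hfinal := key4 r hr le_rfl
    rw [hGr, mul_zero] at hfinal
    exact abs_eq_zero.mp (le_antisymm hfinal (abs_nonneg _))
  · intro x hx
    rw [Real.norm_eq_abs, Real.norm_eq_abs, abs_abs, abs_of_nonneg (hGnn x hx.1), add_zero]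
    exact key4 x hx.1 hx.2.le
end

section
/- Let M : ℝ² → ℝ be continuous with compact support contained in the ball B_R(0) ⊂ ℝ², odd in the first variable (M(-ρ,z) = -M(ρ,z)), and set G(ρ,z) := ∫_{ℝ²} ln|(ρ-ρ̃, z-z̃)| M(ρ̃,z̃) dρ̃ dz̃. Then there is C > 0 with |G(ρ,z)| ≤ C/|(ρ,z)| for all |(ρ,z)| ≥ 2R. -/
open MeasureTheory

private lemma sqrt_eq_cabs (a b : ℝ) :
    Real.sqrt (a ^ 2 + b ^ 2) = ‖(⟨a, b⟩ : ℂ)‖ := by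
  rw [Complex.norm_def, Complex.normSq_mk]
  ring_nf

private lemma abs_log_le_two (t : ℝ) (h1 : 1 / 2 ≤ t) : |Real.log t| ≤ 2 * |t - 1| := by
  have ht : 0 < t := by linarith
  rcases le_or_gt 1 t with h | h
  · rw [abs_of_nonneg (Real.log_nonneg h), abs_of_nonneg (by linarith)]
    have := Real.log_le_sub_one_of_pos ht
    linarith
  · rw [abs_of_nonpos (Real.log_nonpos ht.le h.le), abs_of_neg (by linarith)]
    have h2 : Real.log t⁻¹ ≤ t⁻¹ - 1 := Real.log_le_sub_one_of_pos (by positivity)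
    rw [Real.log_inv] at h2
    have h4 : t⁻¹ - 1 ≤ 2 * (1 - t) := by
      rw [inv_eq_one_div, div_sub' ht.ne', div_le_iff₀ ht]
      nlinarith
    linarith

/-- Decay of the 2D logarithmic potential of a compactly supported density which is odd in
the first variable. -/
theorem stmt8
    (R : ℝ) (hR : 0 < R)
    (M : ℝ × ℝ → ℝ) (hM : Continuous M) (hsupp : HasCompactSupport M)
    (hball : ∀ q : ℝ × ℝ, M q ≠ 0 → Real.sqrt (q.1 ^ 2 + q.2 ^ 2) < R)
    (hodd : ∀ ρ z : ℝ, M (-ρ, z) = -M (ρ, z))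
    (G : ℝ × ℝ → ℝ)
    (hG : ∀ p : ℝ × ℝ, G p =
      ∫ q : ℝ × ℝ, Real.log (Real.sqrt ((p.1 - q.1) ^ 2 + (p.2 - q.2) ^ 2)) * M q) :
    ∃ C : ℝ, 0 < C ∧ ∀ p : ℝ × ℝ,
      2 * R ≤ Real.sqrt (p.1 ^ 2 + p.2 ^ 2) →
        |G p| ≤ C / Real.sqrt (p.1 ^ 2 + p.2 ^ 2) := by
  classical
  have hMint : Integrable M := hM.integrable_of_hasCompactSupport hsupp
  -- the integral of M vanishes by oddness
  have hMzero : (∫ q : ℝ × ℝ, M q) = 0 := by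
    have hFint : Integrable M ((volume : Measure ℝ).prod volume) := by
      rwa [← Measure.volume_eq_prod]
    have h1 : (∫ q : ℝ × ℝ, M q) = ∫ x : ℝ, ∫ y : ℝ, M (x, y) := by
      rw [Measure.volume_eq_prod, MeasureTheory.integral_prod _ hFint]
    have h2 : ∀ x : ℝ, (∫ y : ℝ, M (-x, y)) = -∫ y : ℝ, M (x, y) := by
      intro x
      rw [← integral_neg]
      congr 1
      funext y
      rw [← hodd]
    have h3 : (∫ x : ℝ, ∫ y : ℝ, M (-x, y)) = ∫ x : ℝ, ∫ y : ℝ, M (x, y) :=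
      integral_neg_eq_self (fun x => ∫ y : ℝ, M (x, y)) volume
    have h4 : (∫ x : ℝ, ∫ y : ℝ, M (-x, y)) = -∫ x : ℝ, ∫ y : ℝ, M (x, y) := by
      simp_rw [h2]
      exact integral_neg _
    rw [h1]
    linarith [h3, h4]
  set I : ℝ := ∫ q : ℝ × ℝ, |M q| with hI
  have hInn : 0 ≤ I := integral_nonneg fun q => abs_nonneg _
  refine ⟨2 * R * I + 1, by positivity, fun p hp => ?_⟩
  set np : ℝ := Real.sqrt (p.1 ^ 2 + p.2 ^ 2) with hnp
  have hnp0 : 0 < np := lt_of_lt_of_le (by linarith) hp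
  -- distance function and its key estimate on the support of M
  set d : ℝ × ℝ → ℝ := fun q => Real.sqrt ((p.1 - q.1) ^ 2 + (p.2 - q.2) ^ 2) with hd
  have hdiff : ∀ q : ℝ × ℝ, |d q - np| ≤ Real.sqrt (q.1 ^ 2 + q.2 ^ 2) := by
    intro q
    have e1 : d q = ‖(⟨p.1, p.2⟩ - ⟨q.1, q.2⟩ : ℂ)‖ := by
      rw [hd]
      simp only
      rw [sqrt_eq_cabs]
      congr 1
    have e2 : np = ‖(⟨p.1, p.2⟩ : ℂ)‖ := sqrt_eq_cabs p.1 p.2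
    have e3 : Real.sqrt (q.1 ^ 2 + q.2 ^ 2) = ‖(⟨q.1, q.2⟩ : ℂ)‖ :=
      sqrt_eq_cabs q.1 q.2
    rw [e1, e2, e3]
    calc |‖(⟨p.1, p.2⟩ - ⟨q.1, q.2⟩ : ℂ)‖ - ‖(⟨p.1, p.2⟩ : ℂ)‖|
        ≤ ‖(⟨p.1, p.2⟩ - ⟨q.1, q.2⟩ : ℂ) - ⟨p.1, p.2⟩‖ :=
          abs_norm_sub_norm_le _ _
      _ = ‖(⟨q.1, q.2⟩ : ℂ)‖ := by rw [sub_sub_cancel_left, norm_neg]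
  have hdR : ∀ q : ℝ × ℝ, M q ≠ 0 → R < d q := by
    intro q hq
    have h1 := hdiff q
    have h2 := hball q hq
    have := abs_le.1 h1
    linarith
  -- the regularized integrand
  set g : ℝ × ℝ → ℝ :=
    fun q => (Real.log (max (d q) R) - Real.log np) * M q with hg
  have hgeq : G p = ∫ q : ℝ × ℝ, g q := by
    have e0 : (fun q : ℝ × ℝ => Real.log (d q) * M q)
        = fun q => Real.log (max (d q) R) * M q := by
      funext q
      by_cases hq : M q = 0
      · simp [hq]
      · rw [max_eq_left (hdR q hq).le]
    have hcont : Continuous fun q : ℝ × ℝ => Real.log (max (d q) R) * M q := by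
      refine Continuous.mul ?_ hM
      refine Continuous.log ?_ ?_
      · exact Continuous.max (Real.continuous_sqrt.comp (by continuity)) continuous_const
      · intro q
        have : R ≤ max (d q) R := le_max_right _ _
        positivity
    have hcs : HasCompactSupport fun q : ℝ × ℝ => Real.log (max (d q) R) * M q :=
      hsupp.mul_left
    have hint1 : Integrable fun q : ℝ × ℝ => Real.log (max (d q) R) * M q :=
      hcont.integrable_of_hasCompactSupport hcs
    have hint2 : Integrable fun q : ℝ × ℝ => Real.log np * M q := hMint.const_mul _
    have : G p = ∫ q : ℝ × ℝ, Real.log (max (d q) R) * M q := by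
      rw [hG p, ← e0]
    rw [this]
    have hsub : (∫ q : ℝ × ℝ, g q)
        = (∫ q : ℝ × ℝ, Real.log (max (d q) R) * M q)
          - ∫ q : ℝ × ℝ, Real.log np * M q := by
      rw [← integral_sub hint1 hint2]
      congr 1
      funext q
      rw [hg]
      ring
    rw [hsub, integral_const_mul, hMzero, mul_zero, sub_zero]
  -- pointwise bound on g
  have hbound : ∀ q : ℝ × ℝ, ‖g q‖ ≤ 2 * R / np * |M q| := by
    intro q
    by_cases hq : M q = 0
    · simp [hg, hq]
    · have hqR : Real.sqrt (q.1 ^ 2 + q.2 ^ 2) < R := hball q hq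
      have hdq : R < d q := hdR q hq
      have hdq0 : 0 < d q := lt_trans hR hdq
      have hlog : Real.log (d q) - Real.log np = Real.log (d q / np) :=
        (Real.log_div hdq0.ne' hnp0.ne').symm
      have ht12 : 1 / 2 ≤ d q / np := by
        rw [le_div_iff₀ hnp0]
        have := abs_le.1 (hdiff q)
        nlinarith
      have hkey : |Real.log (d q) - Real.log np| ≤ 2 * R / np := by
        rw [hlog]
        calc |Real.log (d q / np)| ≤ 2 * |d q / np - 1| := abs_log_le_two _ ht12
          _ = 2 * (|d q - np| / np) := by
              rw [div_sub_one hnp0.ne', abs_div, abs_of_pos hnp0]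
          _ ≤ 2 * R / np := by
              rw [mul_div_assoc]
              have h1 : |d q - np| ≤ R := le_trans (hdiff q) hqR.le
              gcongr
      rw [hg]
      simp only [Real.norm_eq_abs, abs_mul]
      rw [max_eq_left hdq.le]
      exact mul_le_mul_of_nonneg_right hkey (abs_nonneg _)
  -- conclude
  have hbint : Integrable fun q : ℝ × ℝ => 2 * R / np * |M q| := (hMint.abs).const_mul _
  have hle : ‖∫ q : ℝ × ℝ, g q‖ ≤ ∫ q : ℝ × ℝ, 2 * R / np * |M q| :=
    norm_integral_le_of_norm_le hbint (Filter.Eventually.of_forall hbound)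
  rw [hgeq, ← Real.norm_eq_abs]
  refine hle.trans ?_
  rw [integral_const_mul, ← hI]
  rw [div_mul_eq_mul_div]
  gcongr
  linarith
end
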